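/- Let G be a terrain-like graph on [n] and 1 ≤ x < y ≤ n. If no edge {u,v} of G satisfies {u,v} ⪯ {x,y}, then the pair (2x, 2y-1) is in non-edge configuration in Π(G). -/

import Mathlib

/-- A graph on vertex set `[n]` (vertices `Fin n` in increasing order) is terrain-like
if it satisfies the X-property. -/
def TerrainLike {n : ℕ} (G : SimpleGraph (Fin n)) : Prop :=
  ∀ a b c d : Fin n, a < b → b < c → c < d → G.Adj a c → G.Adj b d → G.Adj a d

/-- The order `⪯` on pairs `(a,b)` with `a < b`: `{a,b} ⪯ {c,d}` iff `c ≤ a < b ≤ d`. -/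
def PairLE {n : ℕ} (e f : Fin n × Fin n) : Prop :=
  f.1 ≤ e.1 ∧ e.2 ≤ f.2

/-- `τ({a,b})` is the transposition `(2a, 2b-1)` of `[2n]`; here vertices and the
elements of `[2n]` are 0-indexed, so it swaps the 0-based positions `2a+1` and `2b`. -/
def tau {n : ℕ} (e : Fin n × Fin n) : Equiv.Perm (Fin (2 * n)) :=
  Equiv.swap ⟨2 * e.1.val + 1, by have := e.1.isLt; omega⟩
    ⟨2 * e.2.val, by have := e.2.isLt; omega⟩

/-- `π₀ = (1,2)(3,4)⋯(2n-1,2n)` (0-indexed: swaps `2i` and `2i+1` for each `i < n`). -/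
def pi0 (n : ℕ) : Equiv.Perm (Fin (2 * n)) :=
  (List.ofFn (fun i : Fin n =>
    Equiv.swap ⟨2 * i.val, by have := i.isLt; omega⟩
      ⟨2 * i.val + 1, by have := i.isLt; omega⟩)).prod

/-- Dumont derangements of the second kind, on `Fin (2*n)` (0-indexed version of `[2n]`):
`π(2i-1) ≥ 2i-1`, `π(2i) < 2i` for `i ∈ [n]`, and `π(2i-1) > 2i-1` for `i ∈ [n-1]`. -/
def IsDumontDerangement {n : ℕ} (π : Equiv.Perm (Fin (2 * n))) : Prop :=
  (∀ i : Fin (2 * n), i.val % 2 = 0 → i.val ≤ (π i).val) ∧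
  (∀ i : Fin (2 * n), i.val % 2 = 1 → (π i).val < i.val) ∧
  (∀ i : Fin (2 * n), i.val % 2 = 0 → i.val < 2 * n - 2 → i.val < (π i).val)

/-- `i` and `j` are in edge configuration in `π` iff
`π⁻¹(i) < π⁻¹(j) ⟺ π⁻¹(i) ≡ π⁻¹(j) (mod 2)`. -/
def EdgeConfig {m : ℕ} (π : Equiv.Perm (Fin m)) (i j : Fin m) : Prop :=
  (π.symm i).val < (π.symm j).val ↔ (π.symm i).val % 2 = (π.symm j).val % 2

/-- A list `e₁ > ⋯ > e_m` of the edges of `G` (as pairs `(a,b)`, `a < b`), ordered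
descendingly with respect to a valid linear order (one extending `⪯`): no earlier
element is `⪯`-below a later one. -/
def ValidEdgeList {n : ℕ} (G : SimpleGraph (Fin n)) (l : List (Fin n × Fin n)) : Prop :=
  l.Nodup ∧ (∀ e : Fin n × Fin n, e ∈ l ↔ (e.1 < e.2 ∧ G.Adj e.1 e.2)) ∧
  l.Pairwise (fun e f => ¬ PairLE e f)

/-- `Π(G) = τ(e_m)⋯τ(e₁)π₀` for an edge list `[e₁,…,e_m]`. -/
def permOfList {n : ℕ} (l : List (Fin n × Fin n)) : Equiv.Perm (Fin (2 * n)) :=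
  (l.reverse.map tau).prod * pi0 n

namespace NEC
variable {n : ℕ}

def oPt (a : Fin n) : Fin (2*n) := ⟨2*a.val+1, by have := a.isLt; omega⟩
def ePt (b : Fin n) : Fin (2*n) := ⟨2*b.val, by have := b.isLt; omega⟩

lemma tau_def (e : Fin n × Fin n) : tau e = Equiv.swap (oPt e.1) (ePt e.2) := rfl

lemma oPt_inj {a b : Fin n} (h : oPt a = oPt b) : a = b := by
  have := congrArg Fin.val h
  simp only [oPt] at this
  exact Fin.ext (by omega)

lemma ePt_inj {a b : Fin n} (h : ePt a = ePt b) : a = b := by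
  have := congrArg Fin.val h
  simp only [ePt] at this
  exact Fin.ext (by omega)

lemma oPt_ne_ePt (a b : Fin n) : oPt a ≠ ePt b := by
  intro h
  have := congrArg Fin.val h
  simp only [oPt, ePt] at this
  omega

lemma prod_fix {β : Type*} (L : List (Equiv.Perm β)) (z : β) (h : ∀ g ∈ L, g z = z) :
    L.prod z = z := by
  induction L with
  | nil => simp
  | cons g L ih =>
    simp only [List.prod_cons, Equiv.Perm.mul_apply]
    rw [ih (fun g hg => h g (List.mem_cons_of_mem _ hg)), h g (List.mem_cons_self)]

lemma prod_ofFn_apply {β : Type*} : ∀ (m : ℕ) (f : Fin m → Equiv.Perm β) (z w : β) (k : Fin m),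
    f k z = w → (∀ i, i ≠ k → f i z = z) → (∀ i, i ≠ k → f i w = w) →
    (List.ofFn f).prod z = w := by
  intro m
  induction m with
  | zero => intro f z w k; exact k.elim0
  | succ m ih =>
    intro f z w k hk hz hw
    rw [List.ofFn_succ, List.prod_cons, Equiv.Perm.mul_apply]
    rcases Fin.eq_zero_or_eq_succ k with h0 | ⟨k', rfl⟩
    · subst h0
      rw [prod_fix _ _ (fun g hg => ?_), hk]
      rw [List.mem_ofFn] at hg
      obtain ⟨i, rfl⟩ := hg
      exact hz i.succ (Fin.succ_ne_zero i)
    · rw [ih (fun i => f i.succ) z w k' hk (fun i hi => hz i.succ (by simpa using hi))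
        (fun i hi => hw i.succ (by simpa using hi))]
      exact hw 0 (Ne.symm (Fin.succ_ne_zero k'))

lemma pi0_even (b : Fin n) : pi0 n (ePt b) = oPt b := by
  unfold pi0
  refine prod_ofFn_apply n _ _ _ b ?_ ?_ ?_
  · have h1 : (⟨2 * b.val, by have := b.isLt; omega⟩ : Fin (2*n)) = ePt b := rfl
    have h2 : (⟨2 * b.val + 1, by have := b.isLt; omega⟩ : Fin (2*n)) = oPt b := rfl
    rw [h1, h2, Equiv.swap_apply_left]
  · intro i hi
    have hvi : i.val ≠ b.val := fun hh => hi (Fin.ext hh)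
    apply Equiv.swap_apply_of_ne_of_ne <;>
      · intro hc; have := congrArg Fin.val hc; simp only [ePt] at this; omega
  · intro i hi
    have hvi : i.val ≠ b.val := fun hh => hi (Fin.ext hh)
    apply Equiv.swap_apply_of_ne_of_ne <;>
      · intro hc; have := congrArg Fin.val hc; simp only [oPt] at this; omega

lemma pi0_odd (a : Fin n) : pi0 n (oPt a) = ePt a := by
  unfold pi0
  refine prod_ofFn_apply n _ _ _ a ?_ ?_ ?_
  · have h1 : (⟨2 * a.val, by have := a.isLt; omega⟩ : Fin (2*n)) = ePt a := rfl
    have h2 : (⟨2 * a.val + 1, by have := a.isLt; omega⟩ : Fin (2*n)) = oPt a := rfl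
    rw [h1, h2, Equiv.swap_apply_right]
  · intro i hi
    have hvi : i.val ≠ a.val := fun hh => hi (Fin.ext hh)
    apply Equiv.swap_apply_of_ne_of_ne <;>
      · intro hc; have := congrArg Fin.val hc; simp only [oPt] at this; omega
  · intro i hi
    have hvi : i.val ≠ a.val := fun hh => hi (Fin.ext hh)
    apply Equiv.swap_apply_of_ne_of_ne <;>
      · intro hc; have := congrArg Fin.val hc; simp only [ePt] at this; omega

lemma pi0_sq : (pi0 n) * (pi0 n) = 1 := by
  ext z
  simp only [Equiv.Perm.mul_apply, Equiv.Perm.one_apply]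
  rcases Nat.even_or_odd z.val with he | ho
  · have : z = ePt ⟨z.val / 2, by have := z.isLt; rcases he with ⟨k,hk⟩; omega⟩ := by
      apply Fin.ext; simp only [ePt]; rcases he with ⟨k,hk⟩; omega
    rw [this, pi0_even, pi0_odd]
  · have : z = oPt ⟨z.val / 2, by have := z.isLt; rcases ho with ⟨k,hk⟩; omega⟩ := by
      apply Fin.ext; simp only [oPt]; rcases ho with ⟨k, hk⟩; omega
    rw [this, pi0_odd, pi0_even]

lemma rev_prod_prod {β : Type*} : ∀ (L : List (Equiv.Perm β)), (∀ g ∈ L, g * g = 1) →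
    L.reverse.prod * L.prod = 1 := by
  intro L
  induction L with
  | nil => simp
  | cons g L ih =>
    intro hg
    rw [List.reverse_cons, List.prod_append, List.prod_cons, List.prod_nil, List.prod_cons,
      mul_one]
    have : L.reverse.prod * g * (g * L.prod) = L.reverse.prod * (g * g) * L.prod := by
      group
    rw [this, hg g (List.mem_cons_self), mul_one,
      ih (fun g' hg' => hg g' (List.mem_cons_of_mem _ hg'))]

lemma permOfList_symm (l : List (Fin n × Fin n)) :
    (permOfList l).symm = pi0 n * (l.map tau).prod := by
  have h1 : permOfList l * (pi0 n * (l.map tau).prod) = 1 := by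
    unfold permOfList
    have h0 : (l.reverse.map tau).prod * pi0 n * (pi0 n * (l.map tau).prod)
        = (l.reverse.map tau).prod * (pi0 n * pi0 n) * (l.map tau).prod := by group
    rw [h0, pi0_sq, mul_one]
    have h2 : l.reverse.map tau = (l.map tau).reverse := by
      rw [List.map_reverse]
    rw [h2]
    apply rev_prod_prod
    intro g hg
    rw [List.mem_map] at hg
    obtain ⟨e, _, rfl⟩ := hg
    rw [tau_def]
    exact Equiv.swap_mul_self _ _
  have h2 : pi0 n * (l.map tau).prod = (permOfList l)⁻¹ :=
    eq_inv_of_mul_eq_one_right h1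
  rw [h2]
  rfl

section Helpers
variable {G : SimpleGraph (Fin n)} {r done : List (Fin n × Fin n)} {e : Fin n × Fin n}

lemma newE_set (hmem : ∀ f, f ∈ r ++ e :: done ↔ (f.1 < f.2 ∧ G.Adj f.1 f.2))
    (hed : ∀ d ∈ done, ¬ PairLE e d) (he12 : e.1 < e.2) :
    ∀ s, s < e.1 → G.Adj s e.2 → (s, e.2) ∈ r := by
  intro s hs hadj
  have hm : (s, e.2) ∈ r ++ e :: done := (hmem (s, e.2)).2 ⟨lt_trans hs he12, hadj⟩
  rcases List.mem_append.1 hm with hh | hh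
  · exact hh
  · rcases List.mem_cons.1 hh with hh | hh
    · exfalso; have : s = e.1 := congrArg Prod.fst hh; exact absurd this (ne_of_lt hs)
    · exact absurd ⟨le_of_lt hs, le_refl _⟩ (hed _ hh)

lemma newO_set (hmem : ∀ f, f ∈ r ++ e :: done ↔ (f.1 < f.2 ∧ G.Adj f.1 f.2))
    (hed : ∀ d ∈ done, ¬ PairLE e d) (he12 : e.1 < e.2) :
    ∀ t, e.2 < t → G.Adj e.1 t → (e.1, t) ∈ r := by
  intro t ht hadj
  have hm : (e.1, t) ∈ r ++ e :: done := (hmem (e.1, t)).2 ⟨lt_trans he12 ht, hadj⟩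
  rcases List.mem_append.1 hm with hh | hh
  · exact hh
  · rcases List.mem_cons.1 hh with hh | hh
    · exfalso; have : t = e.2 := congrArg Prod.snd hh; exact absurd this (ne_of_gt ht)
    · exact absurd ⟨le_refl _, le_of_lt ht⟩ (hed _ hh)

lemma newE_cond (hre : ∀ f ∈ r, ¬ PairLE f e) : ∀ f ∈ r, f.2 = e.2 → f.1 < e.1 := by
  intro f hf hf2
  by_contra hc
  exact hre f hf ⟨not_lt.1 hc, le_of_eq hf2⟩

lemma newO_cond (hre : ∀ f ∈ r, ¬ PairLE f e) : ∀ f ∈ r, f.1 = e.1 → e.2 < f.2 := by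
  intro f hf hf1
  by_contra hc
  exact hre f hf ⟨le_of_eq hf1.symm, not_lt.1 hc⟩
end Helpers

variable (G : SimpleGraph (Fin n)) (x y : Fin n)

inductive VC : Bool → ℕ → Fin n → Fin n → Prop where
  | up1 (b : Fin n) : G.Adj x b → y < b → (∀ t, y < t → G.Adj x t → b ≤ t) → VC true 1 x b
  | upStep (j : ℕ) (a bp b : Fin n) : VC false j a bp → G.Adj a b → bp < b →
      (∀ t, bp < t → G.Adj a t → b ≤ t) → VC true (j+1) a b
  | leftStep (j : ℕ) (c b a : Fin n) : VC true j c b → G.Adj a b → a < c →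
      (∀ s, s < c → G.Adj s b → s ≤ a) → VC false j a b

inductive WC : Bool → ℕ → Fin n → Fin n → Prop where
  | left1 (a : Fin n) : G.Adj a y → a < x → (∀ s, s < x → G.Adj s y → s ≤ a) → WC false 1 a y
  | leftStep (j : ℕ) (ap e a : Fin n) : WC true j ap e → G.Adj a e → a < ap →
      (∀ s, s < ap → G.Adj s e → s ≤ a) → WC false (j+1) a e
  | upStep (j : ℕ) (a e b : Fin n) : WC false j a e → G.Adj a b → e < b →
      (∀ t, e < t → G.Adj a t → b ≤ t) → WC true j a b

variable {G x y}

lemma VC_facts {fl j} {p q : Fin n} (hd : VC G x y fl j p q) :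
    1 ≤ j ∧ p ≤ x ∧ y < q ∧ (fl = false → p < x) := by
  induction hd with
  | up1 b h1 h2 h3 => exact ⟨le_refl _, le_refl _, h2, by simp⟩
  | upStep j a bp b hd h1 h2 h3 ih => exact ⟨by omega, ih.2.1, lt_trans ih.2.2.1 h2, by simp⟩
  | leftStep j c b a hd h1 h2 h3 ih =>
      exact ⟨ih.1, le_of_lt (lt_of_lt_of_le h2 ih.2.1), ih.2.2.1,
        fun _ => lt_of_lt_of_le h2 ih.2.1⟩

lemma WC_facts {fl j} {p q : Fin n} (hd : WC G x y fl j p q) :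
    1 ≤ j ∧ p < x ∧ y ≤ q ∧ (fl = true → y < q) := by
  induction hd with
  | left1 a h1 h2 h3 => exact ⟨le_refl _, h2, le_refl _, by simp⟩
  | leftStep j ap e a hd h1 h2 h3 ih =>
      exact ⟨by omega, lt_trans h2 ih.2.1, ih.2.2.2 rfl |>.le, fun _ => ih.2.2.2 rfl⟩
  | upStep j a e b hd h1 h2 h3 ih =>
      exact ⟨ih.1, ih.2.1, le_of_lt (lt_of_le_of_lt ih.2.2.1 h2), fun _ => lt_of_le_of_lt ih.2.2.1 h2⟩

lemma lemA (hG : TerrainLike G) (hxy : x < y) :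
    ∀ j (a' e c b : Fin n), WC G x y false j a' e → VC G x y true j c b →
      G.Adj a' b ∧ a' < c ∧ e < b := by
  intro j
  induction j with
  | zero => intro a' e c b hW _; exact absurd (WC_facts hW).1 (by omega)
  | succ j ih =>
    intro a' e c b hW hV
    cases hW with
    | left1 a h1 h2 h3 =>
      -- j = 0, index 1
      cases hV with
      | up1 b h4 h5 h6 => exact ⟨hG a' x y b h2 hxy h5 h1 h4, h2, h5⟩
      | upStep j' a2 bp b2 hd h4 h5 h6 => exact absurd (VC_facts hd).1 (by omega)
    | leftStep j2 ap e2 a2 h_wu h_adj h_alt maxW' =>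
      cases h_wu with
      | upStep j3 a3 e3 b3 h_wl adj_ap_e hep minW =>
        cases hV with
        | up1 b h4 h5 h6 => exact absurd (WC_facts h_wl).1 (by omega)
        | upStep j4 a4 bp b4 h_vf adj_cb hbp minV =>
          cases h_vf with
          | leftStep j5 c2 b5 a5 h_vu adj_c_bp hcc2 maxV =>
            obtain ⟨adj_ap_bp, hap_lt, hep_lt⟩ := ih _ _ _ _ h_wl h_vu
            have hap_le_c : ap ≤ c := maxV ap hap_lt adj_ap_bp
            have he_le_bp : e ≤ bp := minW bp hep_lt adj_ap_bp
            have ha'c : a' < c := lt_of_lt_of_le h_alt hap_le_c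
            have heb : e < b := lt_of_le_of_lt he_le_bp hbp
            have hce : c < e := by
              have h1 : c2 ≤ x := (VC_facts h_vu).2.1
              have h2 : y ≤ e3 := (WC_facts h_wl).2.2.1
              calc c < c2 := hcc2
                _ ≤ x := h1
                _ < y := hxy
                _ ≤ e3 := h2
                _ < e := hep
            exact ⟨hG a' c e b ha'c hce heb h_adj adj_cb, ha'c, heb⟩

lemma VC_prefix {fl K} {p q : Fin n} (hd : VC G x y fl K p q) :
    ∀ j, 1 ≤ j → j ≤ K → ∃ c b : Fin n, VC G x y true j c b ∧ b ≤ q := by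
  induction hd with
  | up1 b h1 h2 h3 =>
    intro j hj1 hjK
    have : j = 1 := by omega
    subst this
    exact ⟨x, b, VC.up1 b h1 h2 h3, le_refl _⟩
  | upStep j' a bp b hd h1 h2 h3 ih =>
    intro j hj1 hjK
    rcases Nat.lt_or_ge j (j'+1) with hlt | hge
    · obtain ⟨c', b', hc, hb⟩ := ih j hj1 (by omega)
      exact ⟨c', b', hc, le_of_lt (lt_of_le_of_lt hb h2)⟩
    · have : j = j' + 1 := by omega
      subst this
      exact ⟨a, b, VC.upStep j' a bp b hd h1 h2 h3, le_refl _⟩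
  | leftStep j' c b a hd h1 h2 h3 ih => exact ih

lemma WC_prefix {fl L} {p q : Fin n} (hd : WC G x y fl L p q) :
    ∀ j, 1 ≤ j → j ≤ L → ∃ a e : Fin n, WC G x y false j a e ∧ p ≤ a := by
  induction hd with
  | left1 a h1 h2 h3 =>
    intro j hj1 hjL
    have : j = 1 := by omega
    subst this
    exact ⟨a, y, WC.left1 a h1 h2 h3, le_refl _⟩
  | leftStep j' ap e a hd h1 h2 h3 ih =>
    intro j hj1 hjL
    rcases Nat.lt_or_ge j (j'+1) with hlt | hge
    · obtain ⟨a', e', ha, hp⟩ := ih j hj1 (by omega)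
      exact ⟨a', e', ha, le_of_lt (lt_of_lt_of_le h2 hp)⟩
    · have : j = j' + 1 := by omega
      subst this
      exact ⟨a, e, WC.leftStep j' ap e a hd h1 h2 h3, le_refl _⟩
  | upStep j' a e b hd h1 h2 h3 ih => exact ih

section Claims
variable (hG : TerrainLike G) (hxy : x < y)
include hG hxy

lemma claim1 {K L} {c b a' e : Fin n} (hV : VC G x y true K c b)
    (hnl : ∀ s, s < c → ¬ G.Adj s b) (hW : WC G x y false L a' e)
    (hnu : ∀ t, e < t → ¬ G.Adj a' t) : False := by
  rcases le_or_gt L K with hLK | hKL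
  · obtain ⟨cL, bL, hVL, _⟩ := VC_prefix hV L (WC_facts hW).1 hLK
    obtain ⟨hadj, _, he⟩ := lemA hG hxy L a' e cL bL hW hVL
    exact hnu bL he hadj
  · obtain ⟨a2, e2, hWK, _⟩ := WC_prefix hW K (VC_facts hV).1 (le_of_lt hKL)
    obtain ⟨hadj, hlt, _⟩ := lemA hG hxy K a2 e2 c b hWK hV
    exact hnl a2 hlt hadj

lemma claim2 {K L} {a b a' e : Fin n} (hV : VC G x y false K a b)
    (hW : WC G x y false L a' e) (hnu : ∀ t, e < t → ¬ G.Adj a' t) : a' < a := by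
  cases hV with
  | leftStep j c b2 a2 hVU hadj hac maxV =>
    rcases le_or_gt L K with hLK | hKL
    · exfalso
      obtain ⟨cL, bL, hVL, _⟩ := VC_prefix hVU L (WC_facts hW).1 hLK
      obtain ⟨hadj2, _, he⟩ := lemA hG hxy L a' e cL bL hW hVL
      exact hnu bL he hadj2
    · obtain ⟨a2, e2, hWK1, hle⟩ := WC_prefix hW (K+1) (by omega) hKL
      cases hWK1 with
      | left1 a3 h1 h2 h3 => exact absurd (VC_facts hVU).1 (by omega)
      | leftStep j2 ap e3 a3 hWU h1 h2 h3 =>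
        cases hWU with
        | upStep j3 a4 e4 b4 hWL h4 h5 h6 =>
          obtain ⟨hadj3, hlt3, _⟩ := lemA hG hxy K ap e4 c b hWL hVU
          have : ap ≤ a := maxV ap hlt3 hadj3
          calc a' ≤ a2 := hle
            _ < ap := h2
            _ ≤ a := this

lemma claim3 {K L} {c b a' b' : Fin n} (hV : VC G x y true K c b)
    (hnl : ∀ s, s < c → ¬ G.Adj s b) (hW : WC G x y true L a' b') : b' < b := by
  cases hW with
  | upStep j a e b2 hWL hadj heb minW =>
    rcases le_or_gt K L with hKL | hLK
    · exfalso
      obtain ⟨a2, e2, hWK, _⟩ := WC_prefix hWL K (VC_facts hV).1 hKL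
      obtain ⟨hadj2, hlt2, _⟩ := lemA hG hxy K a2 e2 c b hWK hV
      exact hnl a2 hlt2 hadj2
    · obtain ⟨c2, b2', hVL1, hble⟩ := VC_prefix hV (L+1) (by omega) hLK
      cases hVL1 with
      | up1 b3 h1 h2 h3 => exact absurd (WC_facts hWL).1 (by omega)
      | upStep j2 a3 bp b3 hVF h4 h5 h6 =>
        cases hVF with
        | leftStep j3 c3 b4 a4 hVU h7 h8 h9 =>
          obtain ⟨hadj3, _, helt⟩ := lemA hG hxy L a' e c3 bp hWL hVU
          have : b' ≤ bp := minW bp helt hadj3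
          calc b' ≤ bp := this
            _ < b2' := h5
            _ ≤ b := hble
end Claims


section Phase1
variable (G : SimpleGraph (Fin n)) (x y : Fin n)

def InvV (rem : List (Fin n × Fin n)) (v : Fin (2*n)) : Prop :=
  (v = oPt x ∧ ∀ t : Fin n, x < t → G.Adj x t → (x, t) ∈ rem)
  ∨ (∃ (j : ℕ) (a bh : Fin n), VC G x y false j a bh ∧ v = oPt a ∧
      (∀ t, bh < t → G.Adj a t → (a, t) ∈ rem) ∧ (∀ f ∈ rem, f.1 = a → bh < f.2))
  ∨ (∃ (j : ℕ) (c b : Fin n), VC G x y true j c b ∧ v = ePt b ∧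
      (∀ s, s < c → G.Adj s b → (s, b) ∈ rem) ∧ (∀ f ∈ rem, f.2 = b → f.1 < c))

def FinV (v : Fin (2*n)) : Prop :=
  (v = oPt x ∧ ∀ t : Fin n, x < t → ¬ G.Adj x t)
  ∨ (∃ (j : ℕ) (a bh : Fin n), VC G x y false j a bh ∧ v = oPt a ∧
      (∀ t, bh < t → ¬ G.Adj a t))
  ∨ (∃ (j : ℕ) (c b : Fin n), VC G x y true j c b ∧ v = ePt b ∧
      (∀ s, s < c → ¬ G.Adj s b))

def InvW (rem : List (Fin n × Fin n)) (w : Fin (2*n)) : Prop :=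
  (w = ePt y ∧ ∀ s : Fin n, s < y → G.Adj s y → (s, y) ∈ rem)
  ∨ (∃ (j : ℕ) (a eh : Fin n), WC G x y false j a eh ∧ w = oPt a ∧
      (∀ t, eh < t → G.Adj a t → (a, t) ∈ rem) ∧ (∀ f ∈ rem, f.1 = a → eh < f.2))
  ∨ (∃ (j : ℕ) (a b : Fin n), WC G x y true j a b ∧ w = ePt b ∧
      (∀ s, s < a → G.Adj s b → (s, b) ∈ rem) ∧ (∀ f ∈ rem, f.2 = b → f.1 < a))

def FinW (w : Fin (2*n)) : Prop :=
  (w = ePt y ∧ ∀ s : Fin n, s < y → ¬ G.Adj s y)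
  ∨ (∃ (j : ℕ) (a eh : Fin n), WC G x y false j a eh ∧ w = oPt a ∧
      (∀ t, eh < t → ¬ G.Adj a t))
  ∨ (∃ (j : ℕ) (a b : Fin n), WC G x y true j a b ∧ w = ePt b ∧
      (∀ s, s < a → ¬ G.Adj s b))

variable {G x y}

lemma runV (hxy : x < y) (h : ∀ u v : Fin n, u < v → G.Adj u v → ¬ PairLE (u, v) (x, y)) :
    ∀ (rem done : List (Fin n × Fin n)),
      ((rem ++ done).Pairwise (fun e f => ¬ PairLE e f)) →
      (∀ f, f ∈ rem ++ done ↔ (f.1 < f.2 ∧ G.Adj f.1 f.2)) →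
      ∀ v, InvV G x y rem v → FinV G x y (((rem.map tau).prod) v) := by
  intro rem
  induction rem using List.reverseRecOn with
  | nil =>
    intro done hpw hmem v hv
    simp only [List.map_nil, List.prod_nil, Equiv.Perm.one_apply]
    rcases hv with ⟨hve, hset⟩ | ⟨j, a, bh, hvc, hve, hset, _⟩ | ⟨j, c, b, hvc, hve, hset, _⟩
    · exact Or.inl ⟨hve, fun t ht hadj => by simpa using hset t ht hadj⟩
    · exact Or.inr (Or.inl ⟨j, a, bh, hvc, hve, fun t ht hadj => by simpa using hset t ht hadj⟩)
    · exact Or.inr (Or.inr ⟨j, c, b, hvc, hve, fun s hs hadj => by simpa using hset s hs hadj⟩)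
  | append_singleton r e IH =>
    intro done hpw hmem v hv
    rw [List.append_assoc, List.singleton_append] at hpw hmem
    have happ : ((r ++ [e]).map tau).prod v = ((r.map tau).prod) (tau e v) := by
      rw [List.map_append, List.prod_append]
      simp [Equiv.Perm.mul_apply]
    rw [happ]
    -- extract order facts
    have he_mem : e ∈ r ++ e :: done := by simp
    obtain ⟨he12, heAdj⟩ := (hmem e).1 he_mem
    have hpw' := List.pairwise_append.1 hpw
    have hre : ∀ f ∈ r, ¬ PairLE f e := fun f hf => hpw'.2.2 f hf e (List.mem_cons_self)
    have hed : ∀ d ∈ done, ¬ PairLE e d := (List.pairwise_cons.1 hpw'.2.1).1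
    have hpw2 : (r ++ done).Pairwise (fun e f => ¬ PairLE e f) := by
      refine List.pairwise_append.2 ⟨hpw'.1, (List.pairwise_cons.1 hpw'.2.1).2,
        fun a ha b hb => hpw'.2.2 a ha b (List.mem_cons_of_mem _ hb)⟩
    have hmem2 : ∀ f, f ∈ r ++ [e] ↔ ((f ∈ r ++ e :: done) ∧ (f ∈ r ∨ f = e)) := by
      intro f
      constructor
      · intro hf
        rcases List.mem_append.1 hf with hh | hh
        · exact ⟨List.mem_append.2 (Or.inl hh), Or.inl hh⟩
        · have : f = e := by simpa using hh
          exact ⟨by simp [this], Or.inr this⟩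
      · rintro ⟨_, hh | rfl⟩
        · exact List.mem_append.2 (Or.inl hh)
        · simp
    apply IH (e :: done) hpw hmem
    -- establish InvV r (tau e v)
    rcases hv with ⟨hve, hset⟩ | ⟨j, a, bh, hvc, hve, hset, hcond⟩ | ⟨j, c, b, hvc, hve, hset, hcond⟩
    · -- initial state
      by_cases hex : e.1 = x
      · have hvmove : tau e v = ePt e.2 := by
          rw [tau_def, hve, ← hex, Equiv.swap_apply_left]
        have hy2 : y < e.2 := by
          have := h e.1 e.2 he12 heAdj
          simp only [PairLE] at this
          push_neg at this
          exact this (le_of_eq hex.symm)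
        have hminc : ∀ t, y < t → G.Adj x t → e.2 ≤ t := by
          intro t ht hadj
          have hmemt : (x, t) ∈ r ++ [e] := hset t (lt_trans hxy ht) hadj
          rcases List.mem_append.1 hmemt with hh | hh
          · have := hre _ hh
            simp only [PairLE] at this
            push_neg at this
            exact le_of_lt (this (le_of_eq hex))
          · have hte : (x, t) = e := by simpa using hh
            have : t = e.2 := congrArg Prod.snd hte
            exact le_of_eq this.symm
        have hVC : VC G x y true 1 x e.2 :=
          VC.up1 e.2 (hex ▸ heAdj) hy2 hminc
        refine Or.inr (Or.inr ⟨1, x, e.2, hVC, hvmove, ?_, ?_⟩)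
        · intro s hs hadj
          exact newE_set hmem hed he12 s (hex ▸ hs) hadj
        · intro f hf hf2
          exact hex ▸ newE_cond hre f hf hf2
      · have hvstay : tau e v = v := by
          rw [tau_def, hve]
          apply Equiv.swap_apply_of_ne_of_ne
          · intro hc; exact hex (oPt_inj hc).symm
          · exact oPt_ne_ePt _ _
        rw [hvstay]
        refine Or.inl ⟨hve, fun t ht hadj => ?_⟩
        have hmemt := hset t ht hadj
        rcases List.mem_append.1 hmemt with hh | hh
        · exact hh
        · exfalso
          have hte : (x, t) = e := by simpa using hh
          exact hex (congrArg Prod.fst hte).symm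
    · -- odd state (a, bh)
      by_cases hex : e.1 = a
      · have hvmove : tau e v = ePt e.2 := by
          rw [tau_def, hve, ← hex, Equiv.swap_apply_left]
        have hb2 : bh < e.2 := hcond e (by simp) hex
        have hminc : ∀ t, bh < t → G.Adj a t → e.2 ≤ t := by
          intro t ht hadj
          have hmemt : (a, t) ∈ r ++ [e] := hset t ht hadj
          rcases List.mem_append.1 hmemt with hh | hh
          · have := hre _ hh
            simp only [PairLE] at this
            push_neg at this
            exact le_of_lt (this (le_of_eq hex))
          · have hte : (a, t) = e := by simpa using hh
            exact le_of_eq (congrArg Prod.snd hte).symm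
        have hVC : VC G x y true (j+1) a e.2 :=
          VC.upStep j a bh e.2 hvc (hex ▸ heAdj) hb2 hminc
        refine Or.inr (Or.inr ⟨j+1, a, e.2, hVC, hvmove, ?_, ?_⟩)
        · intro s hs hadj
          exact newE_set hmem hed he12 s (hex ▸ hs) hadj
        · intro f hf hf2
          exact hex ▸ newE_cond hre f hf hf2
      · have hvstay : tau e v = v := by
          rw [tau_def, hve]
          apply Equiv.swap_apply_of_ne_of_ne
          · intro hc; exact hex (oPt_inj hc).symm
          · exact oPt_ne_ePt _ _
        rw [hvstay]
        refine Or.inr (Or.inl ⟨j, a, bh, hvc, hve, fun t ht hadj => ?_,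
          fun f hf hf1 => hcond f (List.mem_append.2 (Or.inl hf)) hf1⟩)
        have hmemt := hset t ht hadj
        rcases List.mem_append.1 hmemt with hh | hh
        · exact hh
        · exfalso
          have hte : (a, t) = e := by simpa using hh
          exact hex (congrArg Prod.fst hte).symm
    · -- even state (c, b)
      by_cases hey : e.2 = b
      · have hvmove : tau e v = oPt e.1 := by
          rw [tau_def, hve, ← hey, Equiv.swap_apply_right]
        have hs1 : e.1 < c := hcond e (by simp) hey
        have hmaxc : ∀ s, s < c → G.Adj s b → s ≤ e.1 := by
          intro s hs hadj
          have hmems : (s, b) ∈ r ++ [e] := hset s hs hadj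
          rcases List.mem_append.1 hmems with hh | hh
          · by_contra hc
            exact hre _ hh ⟨(not_le.1 hc).le, le_of_eq hey.symm⟩
          · have hte : (s, b) = e := by simpa using hh
            exact le_of_eq (congrArg Prod.fst hte)
        have hVC : VC G x y false j e.1 b :=
          VC.leftStep j c b e.1 hvc (hey ▸ heAdj) hs1 hmaxc
        refine Or.inr (Or.inl ⟨j, e.1, b, hVC, hvmove, ?_, ?_⟩)
        · intro t ht hadj
          exact newO_set hmem hed he12 t (hey ▸ ht) hadj
        · intro f hf hf1
          exact hey ▸ newO_cond hre f hf hf1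
      · have hvstay : tau e v = v := by
          rw [tau_def, hve]
          apply Equiv.swap_apply_of_ne_of_ne
          · exact (oPt_ne_ePt _ _).symm
          · intro hc; exact hey (ePt_inj hc).symm
        rw [hvstay]
        refine Or.inr (Or.inr ⟨j, c, b, hvc, hve, fun s hs hadj => ?_,
          fun f hf hf2 => hcond f (List.mem_append.2 (Or.inl hf)) hf2⟩)
        have hmems := hset s hs hadj
        rcases List.mem_append.1 hmems with hh | hh
        · exact hh
        · exfalso
          have hte : (s, b) = e := by simpa using hh
          exact hey (congrArg Prod.snd hte).symm
end Phase1


section Phase1W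
variable {G : SimpleGraph (Fin n)} {x y : Fin n}

lemma runW (hxy : x < y) (h : ∀ u v : Fin n, u < v → G.Adj u v → ¬ PairLE (u, v) (x, y)) :
    ∀ (rem done : List (Fin n × Fin n)),
      ((rem ++ done).Pairwise (fun e f => ¬ PairLE e f)) →
      (∀ f, f ∈ rem ++ done ↔ (f.1 < f.2 ∧ G.Adj f.1 f.2)) →
      ∀ w, InvW G x y rem w → FinW G x y (((rem.map tau).prod) w) := by
  intro rem
  induction rem using List.reverseRecOn with
  | nil =>
    intro done hpw hmem w hw
    simp only [List.map_nil, List.prod_nil, Equiv.Perm.one_apply]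
    rcases hw with ⟨hwe, hset⟩ | ⟨j, a, eh, hwc, hwe, hset, _⟩ | ⟨j, a, b, hwc, hwe, hset, _⟩
    · exact Or.inl ⟨hwe, fun s hs hadj => by simpa using hset s hs hadj⟩
    · exact Or.inr (Or.inl ⟨j, a, eh, hwc, hwe, fun t ht hadj => by simpa using hset t ht hadj⟩)
    · exact Or.inr (Or.inr ⟨j, a, b, hwc, hwe, fun s hs hadj => by simpa using hset s hs hadj⟩)
  | append_singleton r e IH =>
    intro done hpw hmem w hw
    rw [List.append_assoc, List.singleton_append] at hpw hmem
    have happ : ((r ++ [e]).map tau).prod w = ((r.map tau).prod) (tau e w) := by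
      rw [List.map_append, List.prod_append]
      simp [Equiv.Perm.mul_apply]
    rw [happ]
    have he_mem : e ∈ r ++ e :: done := by simp
    obtain ⟨he12, heAdj⟩ := (hmem e).1 he_mem
    have hpw' := List.pairwise_append.1 hpw
    have hre : ∀ f ∈ r, ¬ PairLE f e := fun f hf => hpw'.2.2 f hf e (List.mem_cons_self)
    have hed : ∀ d ∈ done, ¬ PairLE e d := (List.pairwise_cons.1 hpw'.2.1).1
    apply IH (e :: done) hpw hmem
    rcases hw with ⟨hwe, hset⟩ | ⟨j, a, eh, hwc, hwe, hset, hcond⟩ | ⟨j, a, b, hwc, hwe, hset, hcond⟩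
    · -- initial state: w = ePt y
      by_cases hey : e.2 = y
      · have hwmove : tau e w = oPt e.1 := by
          rw [tau_def, hwe, ← hey, Equiv.swap_apply_right]
        have hx1 : e.1 < x := by
          have := h e.1 e.2 he12 heAdj
          simp only [PairLE] at this
          push_neg at this
          by_contra hc
          exact absurd (le_of_eq hey) (not_le.2 (this (not_lt.1 hc)))
        have hmaxc : ∀ s, s < x → G.Adj s y → s ≤ e.1 := by
          intro s hs hadj
          have hmems : (s, y) ∈ r ++ [e] := hset s (lt_trans hs hxy) hadj
          rcases List.mem_append.1 hmems with hh | hh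
          · by_contra hc
            exact hre _ hh ⟨(not_le.1 hc).le, le_of_eq hey.symm⟩
          · have hte : (s, y) = e := by simpa using hh
            exact le_of_eq (congrArg Prod.fst hte)
        have hWC : WC G x y false 1 e.1 y :=
          WC.left1 e.1 (hey ▸ heAdj) hx1 hmaxc
        refine Or.inr (Or.inl ⟨1, e.1, y, hWC, hwmove, ?_, ?_⟩)
        · intro t ht hadj
          exact newO_set hmem hed he12 t (hey ▸ ht) hadj
        · intro f hf hf1
          exact hey ▸ newO_cond hre f hf hf1
      · have hwstay : tau e w = w := by
          rw [tau_def, hwe]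
          apply Equiv.swap_apply_of_ne_of_ne
          · exact (oPt_ne_ePt _ _).symm
          · intro hc; exact hey (ePt_inj hc).symm
        rw [hwstay]
        refine Or.inl ⟨hwe, fun s hs hadj => ?_⟩
        have hmems := hset s hs hadj
        rcases List.mem_append.1 hmems with hh | hh
        · exact hh
        · exfalso
          have hte : (s, y) = e := by simpa using hh
          exact hey (congrArg Prod.snd hte).symm
    · -- odd state (a, eh)
      by_cases hex : e.1 = a
      · have hwmove : tau e w = ePt e.2 := by
          rw [tau_def, hwe, ← hex, Equiv.swap_apply_left]
        have he2 : eh < e.2 := hcond e (by simp) hex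
        have hminc : ∀ t, eh < t → G.Adj a t → e.2 ≤ t := by
          intro t ht hadj
          have hmemt : (a, t) ∈ r ++ [e] := hset t ht hadj
          rcases List.mem_append.1 hmemt with hh | hh
          · have := hre _ hh
            simp only [PairLE] at this
            push_neg at this
            exact le_of_lt (this (le_of_eq hex))
          · have hte : (a, t) = e := by simpa using hh
            exact le_of_eq (congrArg Prod.snd hte).symm
        have hWC : WC G x y true j a e.2 :=
          WC.upStep j a eh e.2 hwc (hex ▸ heAdj) he2 hminc
        refine Or.inr (Or.inr ⟨j, a, e.2, hWC, hwmove, ?_, ?_⟩)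
        · intro s hs hadj
          exact newE_set hmem hed he12 s (hex ▸ hs) hadj
        · intro f hf hf2
          exact hex ▸ newE_cond hre f hf hf2
      · have hwstay : tau e w = w := by
          rw [tau_def, hwe]
          apply Equiv.swap_apply_of_ne_of_ne
          · intro hc; exact hex (oPt_inj hc).symm
          · exact oPt_ne_ePt _ _
        rw [hwstay]
        refine Or.inr (Or.inl ⟨j, a, eh, hwc, hwe, fun t ht hadj => ?_,
          fun f hf hf1 => hcond f (List.mem_append.2 (Or.inl hf)) hf1⟩)
        have hmemt := hset t ht hadj
        rcases List.mem_append.1 hmemt with hh | hh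
        · exact hh
        · exfalso
          have hte : (a, t) = e := by simpa using hh
          exact hex (congrArg Prod.fst hte).symm
    · -- even state (a, b)
      by_cases hey : e.2 = b
      · have hwmove : tau e w = oPt e.1 := by
          rw [tau_def, hwe, ← hey, Equiv.swap_apply_right]
        have hs1 : e.1 < a := hcond e (by simp) hey
        have hmaxc : ∀ s, s < a → G.Adj s b → s ≤ e.1 := by
          intro s hs hadj
          have hmems : (s, b) ∈ r ++ [e] := hset s hs hadj
          rcases List.mem_append.1 hmems with hh | hh
          · by_contra hc
            exact hre _ hh ⟨(not_le.1 hc).le, le_of_eq hey.symm⟩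
          · have hte : (s, b) = e := by simpa using hh
            exact le_of_eq (congrArg Prod.fst hte)
        have hWC : WC G x y false (j+1) e.1 b :=
          WC.leftStep j a b e.1 hwc (hey ▸ heAdj) hs1 hmaxc
        refine Or.inr (Or.inl ⟨j+1, e.1, b, hWC, hwmove, ?_, ?_⟩)
        · intro t ht hadj
          exact newO_set hmem hed he12 t (hey ▸ ht) hadj
        · intro f hf hf1
          exact hey ▸ newO_cond hre f hf hf1
      · have hwstay : tau e w = w := by
          rw [tau_def, hwe]
          apply Equiv.swap_apply_of_ne_of_ne
          · exact (oPt_ne_ePt _ _).symm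
          · intro hc; exact hey (ePt_inj hc).symm
        rw [hwstay]
        refine Or.inr (Or.inr ⟨j, a, b, hwc, hwe, fun s hs hadj => ?_,
          fun f hf hf2 => hcond f (List.mem_append.2 (Or.inl hf)) hf2⟩)
        have hmems := hset s hs hadj
        rcases List.mem_append.1 hmems with hh | hh
        · exact hh
        · exfalso
          have hte : (s, b) = e := by simpa using hh
          exact hey (congrArg Prod.snd hte).symm
end Phase1W

end NEC

/-- If no edge of the terrain-like graph `G` is `⪯`-below `{x,y}`, then `(2x, 2y-1)` is in
non-edge configuration in `Π(G)`. -/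
theorem nonEdgeConfig_of_no_edge_below {n : ℕ} (G : SimpleGraph (Fin n))
    (hG : TerrainLike G) (x y : Fin n) (hxy : x < y)
    (h : ∀ u v : Fin n, u < v → G.Adj u v → ¬ PairLE (u, v) (x, y)) :
    ∀ l : List (Fin n × Fin n), ValidEdgeList G l →
      ¬ EdgeConfig (permOfList l) ⟨2 * x.val + 1, by have := x.isLt; omega⟩
        ⟨2 * y.val, by have := y.isLt; omega⟩ := by
  intro l hl hEC
  obtain ⟨hnd, hmem, hpw⟩ := hl
  have hpw' : (l ++ ([] : List (Fin n × Fin n))).Pairwise (fun e f => ¬ PairLE e f) := by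
    simpa using hpw
  have hmem' : ∀ f, f ∈ l ++ ([] : List (Fin n × Fin n)) ↔ (f.1 < f.2 ∧ G.Adj f.1 f.2) := by
    simpa using hmem
  have hV := NEC.runV hxy h l [] hpw' hmem' (NEC.oPt x)
    (Or.inl ⟨rfl, fun t ht hadj => (hmem (x, t)).2 ⟨ht, hadj⟩⟩)
  have hW := NEC.runW hxy h l [] hpw' hmem' (NEC.ePt y)
    (Or.inl ⟨rfl, fun s hs hadj => (hmem (s, y)).2 ⟨hs, hadj⟩⟩)
  unfold EdgeConfig at hEC
  rw [NEC.permOfList_symm] at hEC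
  replace hEC :
      ((pi0 n ((l.map tau).prod (NEC.oPt x))).val < (pi0 n ((l.map tau).prod (NEC.ePt y))).val
        ↔ (pi0 n ((l.map tau).prod (NEC.oPt x))).val % 2
            = (pi0 n ((l.map tau).prod (NEC.ePt y))).val % 2) := hEC
  have hxyv : x.val < y.val := hxy
  rcases hV with ⟨hve, hnadV⟩ | ⟨j, a, bh, hvc, hve, hnadV⟩ | ⟨j, c, b, hvc, hve, hnadV⟩ <;>
    rcases hW with ⟨hwe, hnadW⟩ | ⟨j', a', eh, hwc, hwe, hnadW⟩ | ⟨j', a', b', hwc, hwe, hnadW⟩ <;>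
    rw [hve, hwe] at hEC
  · rw [NEC.pi0_odd, NEC.pi0_even] at hEC
    simp only [NEC.oPt, NEC.ePt] at hEC
    omega
  · rw [NEC.pi0_odd, NEC.pi0_odd] at hEC
    have h1 : a'.val < x.val := (NEC.WC_facts hwc).2.1
    simp only [NEC.oPt, NEC.ePt] at hEC
    omega
  · rw [NEC.pi0_odd, NEC.pi0_even] at hEC
    have h1 : y.val < b'.val := (NEC.WC_facts hwc).2.2.2 rfl
    simp only [NEC.oPt, NEC.ePt] at hEC
    omega
  · rw [NEC.pi0_odd, NEC.pi0_even] at hEC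
    have h1 : a.val < x.val := (NEC.VC_facts hvc).2.2.2 rfl
    simp only [NEC.oPt, NEC.ePt] at hEC
    omega
  · rw [NEC.pi0_odd, NEC.pi0_odd] at hEC
    have h1 : a'.val < a.val := NEC.claim2 hG hxy hvc hwc hnadW
    simp only [NEC.oPt, NEC.ePt] at hEC
    omega
  · rw [NEC.pi0_odd, NEC.pi0_even] at hEC
    have h1 : a.val < x.val := (NEC.VC_facts hvc).2.2.2 rfl
    have h2 : y.val < b'.val := (NEC.WC_facts hwc).2.2.2 rfl
    simp only [NEC.oPt, NEC.ePt] at hEC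
    omega
  · rw [NEC.pi0_even, NEC.pi0_even] at hEC
    have h1 : y.val < b.val := (NEC.VC_facts hvc).2.2.1
    simp only [NEC.oPt, NEC.ePt] at hEC
    omega
  · exact NEC.claim1 hG hxy hvc hnadV hwc hnadW
  · rw [NEC.pi0_even, NEC.pi0_even] at hEC
    have h1 : b'.val < b.val := NEC.claim3 hG hxy hvc hnadV hwc
    simp only [NEC.oPt, NEC.ePt] at hEC
    omega
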